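/- Let K ≥ 2, d ≥ 1, and let M_k, N_k (1 ≤ k ≤ K) be positive integers divisible by d with M_k ≥ d and N_k ≥ d, satisfying: for every subset I ⊆ J, |I| · d ≤ Σ_{k ∈ π₁(I)} (N_k − d) + Σ_{j ∈ π₂(I)} (M_j − d). Then there exist matrices H³_{kj} ∈ ℂ^{(N_k − d) × d} and H²_{kj} ∈ ℂ^{d × (M_j − d)} for all (k,j) ∈ J such that the ℂ-linear map sending the tuple of matrices ((W_k)_{k=1}^{K}, (V̄_j)_{j=1}^{K}), with W_k ∈ ℂ^{d × (N_k − d)} and V̄_j ∈ ℂ^{(M_j − d) × d}, to the tuple (W_k H³_{kj} + H²_{kj} V̄_j)_{(k,j) ∈ J} ∈ ∏_{(k,j) ∈ J} ℂ^{d × d}, is surjective. -/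

import Mathlib

open Matrix

/-- **core construction in the proof of Theorem 2.** Under the properness
condition, one can choose the blocks `H³_{kj}` and `H²_{kj}` so that the linear map
`((W_k), (V̄_j)) ↦ (W_k H³_{kj} + H²_{kj} V̄_j)_{(k,j) ∈ J}` is surjective. -/
theorem stmt_19 (K d : ℕ) (hK : 2 ≤ K) (hd : 1 ≤ d) (M N : Fin K → ℕ)
    (hMd : ∀ k, d ≤ M k) (hNd : ∀ k, d ≤ N k)
    (hMdvd : ∀ k, d ∣ M k) (hNdvd : ∀ k, d ∣ N k)
    (hproper : ∀ I : Finset (Fin K × Fin K), (∀ q ∈ I, q.1 ≠ q.2) →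
      I.card * d ≤ ∑ k ∈ I.image Prod.fst, (N k - d)
        + ∑ j ∈ I.image Prod.snd, (M j - d)) :
    ∃ (H3 : ∀ q : {q : Fin K × Fin K // q.1 ≠ q.2},
        Matrix (Fin (N q.1.1 - d)) (Fin d) ℂ)
      (H2 : ∀ q : {q : Fin K × Fin K // q.1 ≠ q.2},
        Matrix (Fin d) (Fin (M q.1.2 - d)) ℂ),
      Function.Surjective
        (fun (WV : (∀ k, Matrix (Fin d) (Fin (N k - d)) ℂ) ×
            (∀ j, Matrix (Fin (M j - d)) (Fin d) ℂ)) =>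
          fun q : {q : Fin K × Fin K // q.1 ≠ q.2} =>
            WV.1 q.1.1 * H3 q + H2 q * WV.2 q.1.2) := by
  classical
  have hd0 : 0 < d := hd
  -- block counts
  have hw : ∀ k, (N k - d) / d * d = N k - d :=
    fun k => Nat.div_mul_cancel (Nat.dvd_sub (hNdvd k) dvd_rfl)
  have hv : ∀ k, (M k - d) / d * d = M k - d :=
    fun k => Nat.div_mul_cancel (Nat.dvd_sub (hMdvd k) dvd_rfl)
  set w : Fin K → ℕ := fun k => (N k - d) / d with hwdef
  set v : Fin K → ℕ := fun k => (M k - d) / d with hvdef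
  -- slot sets for Hall's theorem
  set ι := {q : Fin K × Fin K // q.1 ≠ q.2} with hι
  let A : Fin K → Finset ((Fin K × ℕ) ⊕ (Fin K × ℕ)) :=
    fun k => (Finset.range (w k)).image fun i => Sum.inl (k, i)
  let B : Fin K → Finset ((Fin K × ℕ) ⊕ (Fin K × ℕ)) :=
    fun j => (Finset.range (v j)).image fun i => Sum.inr (j, i)
  let t : ι → Finset ((Fin K × ℕ) ⊕ (Fin K × ℕ)) := fun q => A q.1.1 ∪ B q.1.2
  have hall : ∀ s : Finset ι, s.card ≤ (s.biUnion t).card := by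
    intro s
    have hsplit : s.biUnion t = (s.image fun q => q.1.1).biUnion A ∪
        (s.image fun q => q.1.2).biUnion B := by
      ext x
      simp only [Finset.mem_biUnion, Finset.mem_union, Finset.mem_image, t]
      constructor
      · rintro ⟨q, hq, h | h⟩
        · exact Or.inl ⟨q.1.1, ⟨q, hq, rfl⟩, h⟩
        · exact Or.inr ⟨q.1.2, ⟨q, hq, rfl⟩, h⟩
      · rintro (⟨k, ⟨q, hq, rfl⟩, h⟩ | ⟨j, ⟨q, hq, rfl⟩, h⟩)
        · exact ⟨q, hq, Or.inl h⟩
        · exact ⟨q, hq, Or.inr h⟩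
    have hdisj : Disjoint ((s.image fun q => q.1.1).biUnion A)
        ((s.image fun q => q.1.2).biUnion B) := by
      rw [Finset.disjoint_left]
      intro x hx hx'
      simp only [Finset.mem_biUnion, Finset.mem_image, A, B] at hx hx'
      obtain ⟨_, _, _, _, rfl⟩ := hx
      obtain ⟨_, _, _, _, h⟩ := hx'
      exact Sum.inl_ne_inr h.symm
    have hcardA : ((s.image fun q => q.1.1).biUnion A).card
        = ∑ k ∈ s.image fun q => q.1.1, w k := by
      rw [Finset.card_biUnion]
      · refine Finset.sum_congr rfl fun k _ => ?_
        rw [Finset.card_image_of_injective _ (fun a b h => by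
          simpa using h), Finset.card_range]
      · intro k _ k' _ hkk'
        rw [Function.onFun, Finset.disjoint_left]
        intro x hx hx'
        simp only [Finset.mem_image, A] at hx hx'
        obtain ⟨_, _, rfl⟩ := hx
        obtain ⟨_, _, h⟩ := hx'
        simp only [Sum.inl.injEq, Prod.mk.injEq] at h
        exact hkk' h.1.symm
    have hcardB : ((s.image fun q => q.1.2).biUnion B).card
        = ∑ j ∈ s.image fun q => q.1.2, v j := by
      rw [Finset.card_biUnion]
      · refine Finset.sum_congr rfl fun k _ => ?_
        rw [Finset.card_image_of_injective _ (fun a b h => by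
          simpa using h), Finset.card_range]
      · intro k _ k' _ hkk'
        rw [Function.onFun, Finset.disjoint_left]
        intro x hx hx'
        simp only [Finset.mem_image, B] at hx hx'
        obtain ⟨_, _, rfl⟩ := hx
        obtain ⟨_, _, h⟩ := hx'
        simp only [Sum.inr.injEq, Prod.mk.injEq] at h
        exact hkk' h.1.symm
    rw [hsplit, Finset.card_union_of_disjoint hdisj, hcardA, hcardB]
    -- apply properness
    have hI := hproper (s.image Subtype.val) (by
      intro q hq
      simp only [Finset.mem_image] at hq
      obtain ⟨q', _, rfl⟩ := hq
      exact q'.2)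
    rw [Finset.card_image_of_injective _ Subtype.val_injective,
      Finset.image_image, Finset.image_image] at hI
    simp only [Function.comp_def] at hI
    have h1 : ∑ k ∈ s.image fun q : ι => q.1.1, (N k - d)
        = (∑ k ∈ s.image fun q : ι => q.1.1, w k) * d := by
      rw [Finset.sum_mul]
      exact Finset.sum_congr rfl fun k _ => (hw k).symm
    have h2 : ∑ j ∈ s.image fun q : ι => q.1.2, (M j - d)
        = (∑ j ∈ s.image fun q : ι => q.1.2, v j) * d := by
      rw [Finset.sum_mul]
      exact Finset.sum_congr rfl fun j _ => (hv j).symm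
    have : s.card * d ≤ ((∑ k ∈ s.image fun q : ι => q.1.1, w k)
        + ∑ j ∈ s.image fun q : ι => q.1.2, v j) * d := by
      rw [add_mul]
      calc s.card * d ≤ _ := hI
      _ = _ := by rw [h1, h2]
    exact Nat.le_of_mul_le_mul_right this hd0
  obtain ⟨f, hfinj, hft⟩ :=
    (Finset.all_card_le_biUnion_card_iff_exists_injective t).mp hall
  -- describe f q
  have hf : ∀ q : ι, (∃ i, i < w q.1.1 ∧ f q = Sum.inl (q.1.1, i)) ∨
      (∃ i, i < v q.1.2 ∧ f q = Sum.inr (q.1.2, i)) := by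
    intro q
    have := hft q
    simp only [Finset.mem_union, Finset.mem_image, Finset.mem_range, t, A, B] at this
    rcases this with ⟨i, hi, h⟩ | ⟨i, hi, h⟩
    · exact Or.inl ⟨i, hi, h.symm⟩
    · exact Or.inr ⟨i, hi, h.symm⟩
  let idx : (Fin K × ℕ) ⊕ (Fin K × ℕ) → ℕ := Sum.elim Prod.snd Prod.snd
  refine ⟨fun q => Matrix.of fun a b =>
      if (f q).isLeft = true ∧ (a : ℕ) = idx (f q) * d + (b : ℕ) then 1 else 0,
    fun q => Matrix.of fun b a =>
      if (f q).isLeft = false ∧ (a : ℕ) = idx (f q) * d + (b : ℕ) then 1 else 0, ?_⟩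
  intro T
  refine ⟨⟨fun k => Matrix.of fun r a => ∑ q : ι,
      if q.1.1 = k ∧ (f q).isLeft = true ∧ idx (f q) = (a : ℕ) / d
        then T q r ⟨(a : ℕ) % d, Nat.mod_lt _ hd0⟩ else 0,
    fun j => Matrix.of fun a r => ∑ q : ι,
      if q.1.2 = j ∧ (f q).isLeft = false ∧ idx (f q) = (a : ℕ) / d
        then T q ⟨(a : ℕ) % d, Nat.mod_lt _ hd0⟩ r else 0⟩, ?_⟩
  funext q0
  ext r b0
  simp only [Matrix.add_apply, Matrix.mul_apply, Matrix.of_apply]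
  rcases hf q0 with ⟨i0, hi0, hfq0⟩ | ⟨i0, hi0, hfq0⟩
  · -- the slot of q0 is on the W side
    have hleft : (f q0).isLeft = true := by rw [hfq0]; rfl
    have hidx : idx (f q0) = i0 := by rw [hfq0]; rfl
    have ha0lt : i0 * d + (b0 : ℕ) < N q0.1.1 - d := by
      calc i0 * d + (b0 : ℕ) < (i0 + 1) * d := by
            rw [add_mul, one_mul]; exact Nat.add_lt_add_left b0.is_lt _
        _ ≤ w q0.1.1 * d := Nat.mul_le_mul_right d hi0
        _ = N q0.1.1 - d := hw _
    have hdiv : (i0 * d + (b0 : ℕ)) / d = i0 := by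
      rw [mul_comm, Nat.mul_add_div hd0, Nat.div_eq_of_lt b0.is_lt, add_zero]
    have hmod : (i0 * d + (b0 : ℕ)) % d = (b0 : ℕ) := by
      rw [mul_comm, Nat.mul_add_mod, Nat.mod_eq_of_lt b0.is_lt]
    have hcond : ∀ a : Fin (N q0.1.1 - d),
        (((a : ℕ) = i0 * d + (b0 : ℕ))) = (a = (⟨i0 * d + (b0 : ℕ), ha0lt⟩ : Fin (N q0.1.1 - d))) := by
      intro a
      exact propext ⟨fun h => Fin.ext h, fun h => by rw [h]⟩
    simp only [hleft, hidx, Bool.true_eq_false, false_and, if_false, mul_zero, zero_mul,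
      Finset.sum_const_zero, add_zero, true_and, mul_ite, mul_one, hcond,
      Finset.sum_ite_eq', Finset.mem_univ, if_true, hdiv, hmod]
    rw [Fintype.sum_eq_single q0]
    · rw [if_pos ⟨rfl, hleft, by rw [hidx]⟩]
    · intro q hq
      rw [if_neg]
      rintro ⟨h1, h2, h3⟩
      rcases hf q with ⟨i, hi, hfq⟩ | ⟨i, hi, hfq⟩
      · have : idx (f q) = i := by rw [hfq]; rfl
        rw [this] at h3
        exact hq (hfinj (by rw [hfq, hfq0, h1, h3]))
      · rw [hfq] at h2
        simp at h2
  · -- the slot of q0 is on the V side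
    have hleft : (f q0).isLeft = false := by rw [hfq0]; rfl
    have hidx : idx (f q0) = i0 := by rw [hfq0]; rfl
    have ha0lt : i0 * d + (r : ℕ) < M q0.1.2 - d := by
      calc i0 * d + (r : ℕ) < (i0 + 1) * d := by
            rw [add_mul, one_mul]; exact Nat.add_lt_add_left r.is_lt _
        _ ≤ v q0.1.2 * d := Nat.mul_le_mul_right d hi0
        _ = M q0.1.2 - d := hv _
    have hdiv : (i0 * d + (r : ℕ)) / d = i0 := by
      rw [mul_comm, Nat.mul_add_div hd0, Nat.div_eq_of_lt r.is_lt, add_zero]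
    have hmod : (i0 * d + (r : ℕ)) % d = (r : ℕ) := by
      rw [mul_comm, Nat.mul_add_mod, Nat.mod_eq_of_lt r.is_lt]
    have hcond : ∀ a : Fin (M q0.1.2 - d),
        (((a : ℕ) = i0 * d + (r : ℕ))) = (a = (⟨i0 * d + (r : ℕ), ha0lt⟩ : Fin (M q0.1.2 - d))) := by
      intro a
      exact propext ⟨fun h => Fin.ext h, fun h => by rw [h]⟩
    simp only [hleft, hidx, Bool.false_eq_true, false_and, if_false, mul_zero, zero_mul,
      Finset.sum_const_zero, zero_add, true_and, ite_mul, one_mul, hcond,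
      Finset.sum_ite_eq', Finset.mem_univ, if_true, hdiv, hmod]
    rw [Fintype.sum_eq_single q0]
    · rw [if_pos ⟨rfl, hleft, by rw [hidx]⟩]
    · intro q hq
      rw [if_neg]
      rintro ⟨h1, h2, h3⟩
      rcases hf q with ⟨i, hi, hfq⟩ | ⟨i, hi, hfq⟩
      · rw [hfq] at h2
        simp at h2
      · have : idx (f q) = i := by rw [hfq]; rfl
        rw [this] at h3
        exact hq (hfinj (by rw [hfq, hfq0, h1, h3]))
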